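/- arXiv:1402.0604 — 2 statements merged into one kernel-verified Lean document; each statement's English description precedes it below -/
import Mathlib

section
/- For h > 0 let v₁(x) = h^{−1/4} e^{−x²/(2h)}. Then −h² v₁''(x) + (x² + 1)v₁(x) = (1 + h)v₁(x) for all x ∈ ℝ, and there exists C > 0 such that for all h ∈ (0,1]: ‖v₁‖_{L²(−1/2,1/2)} ≥ C^{−1} and ‖v₁‖_{H¹_h({1/2<|x|<1})} ≤ C e^{−1/(10h)}. -/
open MeasureTheory Set Real

noncomputable section

/-- The `L²` norm of `u` over the set `I`. -/
def l2Norm (I : Set ℝ) (u : ℝ → ℝ) : ℝ :=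
  Real.sqrt (∫ x in I, ‖u x‖ ^ 2)

/-- The semiclassical `H¹_h` norm of `u` (with derivative `u'`) over the set `I`. -/
def h1Norm (h : ℝ) (I : Set ℝ) (u u' : ℝ → ℝ) : ℝ :=
  Real.sqrt ((∫ x in I, ‖u x‖ ^ 2) + ∫ x in I, ‖h * u' x‖ ^ 2)

/-- The Gaussian `v₁(x) = h^{-1/4} e^{-x²/(2h)}`. -/
def gaussQuasimode (h : ℝ) (x : ℝ) : ℝ :=
  h ^ (-(1 / 4 : ℝ)) * Real.exp (-(x ^ 2) / (2 * h))

lemma gauss_hasDerivAt (h : ℝ) (hh : 0 < h) (x : ℝ) :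
    HasDerivAt (gaussQuasimode h) (-(x / h) * gaussQuasimode h x) x := by
  have h1 : HasDerivAt (fun y : ℝ => -(y ^ 2) / (2 * h)) (-(x / h)) x := by
    have h2 := ((hasDerivAt_pow 2 x).neg).div_const (2 * h)
    refine h2.congr_deriv ?_
    field_simp
    ring
  have h3 := (h1.exp).const_mul (h ^ (-(1 / 4 : ℝ)))
  refine h3.congr_deriv ?_
  unfold gaussQuasimode
  ring

lemma gauss_deriv (h : ℝ) (hh : 0 < h) :
    deriv (gaussQuasimode h) = fun x => -(x / h) * gaussQuasimode h x := by
  funext x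
  exact (gauss_hasDerivAt h hh x).deriv

lemma gauss_deriv2 (h : ℝ) (hh : 0 < h) (x : ℝ) :
    deriv (deriv (gaussQuasimode h)) x
      = (x ^ 2 / h ^ 2 - 1 / h) * gaussQuasimode h x := by
  rw [gauss_deriv h hh]
  have h2 : HasDerivAt (fun y : ℝ => -(y / h)) (-(1 / h)) x := by
    exact ((hasDerivAt_id x).div_const h).neg.congr_deriv (by simp)
  have h3 := h2.mul (gauss_hasDerivAt h hh x)
  have h4 : HasDerivAt (fun y : ℝ => -(y / h) * gaussQuasimode h y)
      ((x ^ 2 / h ^ 2 - 1 / h) * gaussQuasimode h x) x := by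
    refine h3.congr_deriv ?_
    field_simp
    ring
  exact h4.deriv

lemma gauss_sq (h : ℝ) (hh : 0 < h) (x : ℝ) :
    gaussQuasimode h x ^ 2 = h ^ (-(1 / 2 : ℝ)) * Real.exp (-(x ^ 2) / h) := by
  unfold gaussQuasimode
  have hne : h ≠ 0 := ne_of_gt hh
  rw [mul_pow, sq (Real.exp _), ← Real.exp_add,
    ← Real.rpow_natCast (h ^ (-(1/4:ℝ))) 2, ← Real.rpow_mul hh.le]
  have e1 : (-(1/4:ℝ)) * (2:ℕ) = -(1/2:ℝ) := by norm_num
  have e2 : -(x^2) / (2*h) + -(x^2)/(2*h) = -(x^2)/h := by field_simp; ring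
  rw [e1, e2]

lemma gauss_norm_sq (h : ℝ) (hh : 0 < h) (x : ℝ) :
    ‖gaussQuasimode h x‖ ^ 2 = h ^ (-(1 / 2 : ℝ)) * Real.exp (-(x ^ 2) / h) := by
  rw [Real.norm_eq_abs, sq_abs, gauss_sq h hh]

lemma gauss_deriv_norm_sq (h : ℝ) (hh : 0 < h) (x : ℝ) :
    ‖h * deriv (gaussQuasimode h) x‖ ^ 2
      = x ^ 2 * (h ^ (-(1 / 2 : ℝ)) * Real.exp (-(x ^ 2) / h)) := by
  rw [gauss_deriv h hh, Real.norm_eq_abs, sq_abs]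
  have hne : h ≠ 0 := ne_of_gt hh
  have : h * (-(x / h) * gaussQuasimode h x) = -(x * gaussQuasimode h x) := by
    field_simp
  rw [this, neg_sq, mul_pow, gauss_sq h hh]

lemma gauss_cont (h : ℝ) : Continuous (gaussQuasimode h) := by
  unfold gaussQuasimode
  exact continuous_const.mul (Real.continuous_exp.comp (by continuity))


/-- The Gaussian `v₁(x) = h^{-1/4} e^{-x²/(2h)}` is an exact eigenfunction of
`-h²∂ₓ² + x² + 1` with eigenvalue `1 + h`; its `L²` norm on `(-1/2, 1/2)` is bounded below and
its `H¹_h` norm on `{1/2 < |x| < 1}` is `O(e^{-1/(10h)})`, uniformly for `h ∈ (0, 1]`. -/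
theorem gaussian_harmonic_oscillator_quasimode :
    ∃ C > (0 : ℝ), ∀ h : ℝ, 0 < h → h ≤ 1 →
      (∀ x : ℝ,
        -h ^ 2 * deriv (deriv (gaussQuasimode h)) x + (x ^ 2 + 1) * gaussQuasimode h x
          = (1 + h) * gaussQuasimode h x) ∧
      C⁻¹ ≤ l2Norm (Set.Ioo (-(1 / 2) : ℝ) (1 / 2)) (gaussQuasimode h) ∧
      h1Norm h {x : ℝ | 1 / 2 < |x| ∧ |x| < 1} (gaussQuasimode h) (deriv (gaussQuasimode h))
        ≤ C * Real.exp (-1 / (10 * h)) := by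
  refine ⟨100, by norm_num, fun h hh h1 => ⟨?_, ?_, ?_⟩⟩
  · intro x
    rw [gauss_deriv2 h hh]
    have hne : h ≠ 0 := ne_of_gt hh
    field_simp
    ring
  · -- L² lower bound
    have hne : h ≠ 0 := ne_of_gt hh
    have hcont : Continuous fun x => ‖gaussQuasimode h x‖ ^ 2 := (gauss_cont h).norm.pow 2
    have hsh : Real.sqrt h ≤ 1 := by
      rw [show (1:ℝ) = Real.sqrt 1 by simp]
      exact Real.sqrt_le_sqrt h1
    have hsh0 : 0 < Real.sqrt h := Real.sqrt_pos.2 hh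
    have hsub : Ioo (-(Real.sqrt h / 2)) (Real.sqrt h / 2) ⊆ Ioo (-(1/2) : ℝ) (1/2) := by
      intro x hx
      obtain ⟨hx1, hx2⟩ := hx
      exact ⟨by linarith, by linarith⟩
    have hInt : IntegrableOn (fun x => ‖gaussQuasimode h x‖ ^ 2) (Ioo (-(1/2):ℝ) (1/2)) :=
      (hcont.integrableOn_Icc).mono_set Ioo_subset_Icc_self
    have step1 : (∫ x in Ioo (-(Real.sqrt h / 2)) (Real.sqrt h / 2), ‖gaussQuasimode h x‖ ^ 2)
        ≤ ∫ x in Ioo (-(1/2):ℝ) (1/2), ‖gaussQuasimode h x‖ ^ 2 := by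
      apply setIntegral_mono_set hInt
      · filter_upwards with x
        positivity
      · exact HasSubset.Subset.eventuallyLE hsub
    have step2 : Real.sqrt h * (h ^ (-(1/2:ℝ)) * Real.exp (-(1/4:ℝ)))
        ≤ ∫ x in Ioo (-(Real.sqrt h / 2)) (Real.sqrt h / 2), ‖gaussQuasimode h x‖ ^ 2 := by
      have hconst : (∫ _x in Ioo (-(Real.sqrt h / 2)) (Real.sqrt h / 2),
          (h ^ (-(1/2:ℝ)) * Real.exp (-(1/4:ℝ))))
          = Real.sqrt h * (h ^ (-(1/2:ℝ)) * Real.exp (-(1/4:ℝ))) := by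
        rw [setIntegral_const, measureReal_def, Real.volume_Ioo, smul_eq_mul,
          ENNReal.toReal_ofReal (by linarith)]
        ring_nf
      rw [← hconst]
      apply setIntegral_mono_on
      · exact integrableOn_const (by rw [Real.volume_Ioo]; exact ENNReal.ofReal_ne_top)
      · exact hInt.mono_set hsub
      · exact measurableSet_Ioo
      · intro x hx
        rw [gauss_norm_sq h hh]
        apply mul_le_mul_of_nonneg_left _ (le_of_lt (Real.rpow_pos_of_pos hh _))
        apply Real.exp_le_exp.2
        obtain ⟨hx1, hx2⟩ := hx
        have hxsq : x ^ 2 ≤ h / 4 := by nlinarith [Real.sq_sqrt hh.le]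
        rw [neg_div, neg_le_neg_iff, div_le_iff₀ hh]
        nlinarith
    have key : Real.sqrt h * h ^ (-(1/2:ℝ)) = 1 := by
      rw [Real.sqrt_eq_rpow, ← Real.rpow_add hh]
      norm_num
    have hexp : (3/4:ℝ) ≤ Real.exp (-(1/4:ℝ)) := by
      have := Real.add_one_le_exp (-(1/4:ℝ))
      linarith
    have hA : (1/10000 : ℝ) ≤ ∫ x in Ioo (-(1/2):ℝ) (1/2), ‖gaussQuasimode h x‖ ^ 2 := by
      have e1 : Real.sqrt h * (h ^ (-(1/2:ℝ)) * Real.exp (-(1/4:ℝ)))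
          = Real.exp (-(1/4:ℝ)) := by
        rw [← mul_assoc, key, one_mul]
      nlinarith [step1, step2]
    unfold l2Norm
    rw [show ((100:ℝ))⁻¹ = Real.sqrt (1/10000) by
      rw [show (1/10000:ℝ) = (1/100)^2 by norm_num, Real.sqrt_sq (by norm_num)]
      norm_num]
    exact Real.sqrt_le_sqrt hA
  · -- H¹ upper bound
    have hne : h ≠ 0 := ne_of_gt hh
    set S : Set ℝ := {x : ℝ | 1 / 2 < |x| ∧ |x| < 1} with hSdef
    have hSsub : S ⊆ Icc (-1:ℝ) 1 := by
      intro x hx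
      have := abs_lt.1 hx.2
      exact ⟨le_of_lt this.1, le_of_lt this.2⟩
    have hSmeas : MeasurableSet S := by
      have : S = abs ⁻¹' Ioo (1/2:ℝ) 1 := rfl
      rw [this]
      exact continuous_abs.measurable measurableSet_Ioo
    have hvolS : volume S ≤ ENNReal.ofReal 2 := by
      calc volume S ≤ volume (Icc (-1:ℝ) 1) := measure_mono hSsub
        _ = ENNReal.ofReal 2 := by rw [Real.volume_Icc]; norm_num
    have hvolS2 : (volume S).toReal ≤ 2 := by
      calc (volume S).toReal ≤ (ENNReal.ofReal 2).toReal :=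
            ENNReal.toReal_mono (by simp) hvolS
        _ = 2 := ENNReal.toReal_ofReal (by norm_num)
    have hvolfin : volume S < ⊤ := lt_of_le_of_lt hvolS ENNReal.ofReal_lt_top
    set M : ℝ := h ^ (-(1/2:ℝ)) * Real.exp (-(1/(4*h))) with hMdef
    have hM0 : 0 ≤ M := by positivity
    have hexpbound : ∀ x ∈ S, Real.exp (-(x^2)/h) ≤ Real.exp (-(1/(4*h))) := by
      intro x hx
      apply Real.exp_le_exp.2
      have hx1 : (1/4:ℝ) ≤ x ^ 2 := by nlinarith [hx.1, abs_nonneg x, sq_abs x]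
      rw [neg_div, neg_le_neg_iff, div_le_div_iff₀ (by positivity) hh]
      nlinarith
    have hxsq1 : ∀ x ∈ S, x ^ 2 ≤ 1 := by
      intro x hx
      nlinarith [hx.2, abs_nonneg x, sq_abs x]
    -- integrability
    have hcont1 : Continuous fun x => ‖gaussQuasimode h x‖ ^ 2 := (gauss_cont h).norm.pow 2
    have hcont2 : Continuous fun x => ‖h * deriv (gaussQuasimode h) x‖ ^ 2 := by
      rw [gauss_deriv h hh]
      exact (continuous_const.mul
        (((continuous_id'.div_const h).neg).mul (gauss_cont h))).norm.pow 2
    have hInt1 : IntegrableOn (fun x => ‖gaussQuasimode h x‖ ^ 2) S :=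
      (hcont1.integrableOn_Icc).mono_set hSsub
    have hInt2 : IntegrableOn (fun x => ‖h * deriv (gaussQuasimode h) x‖ ^ 2) S :=
      (hcont2.integrableOn_Icc).mono_set hSsub
    have hIntc : IntegrableOn (fun _ : ℝ => M) S :=
      integrableOn_const hvolfin.ne
    have bound1 : (∫ x in S, ‖gaussQuasimode h x‖ ^ 2) ≤ 2 * M := by
      calc (∫ x in S, ‖gaussQuasimode h x‖ ^ 2) ≤ ∫ _x in S, M := by
            apply setIntegral_mono_on hInt1 hIntc hSmeas
            intro x hx
            rw [gauss_norm_sq h hh]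
            exact mul_le_mul_of_nonneg_left (hexpbound x hx)
              (le_of_lt (Real.rpow_pos_of_pos hh _))
        _ = (volume S).toReal * M := by rw [setIntegral_const, smul_eq_mul, measureReal_def]
        _ ≤ 2 * M := mul_le_mul_of_nonneg_right hvolS2 hM0
    have bound2 : (∫ x in S, ‖h * deriv (gaussQuasimode h) x‖ ^ 2) ≤ 2 * M := by
      calc (∫ x in S, ‖h * deriv (gaussQuasimode h) x‖ ^ 2) ≤ ∫ _x in S, M := by
            apply setIntegral_mono_on hInt2 hIntc hSmeas
            intro x hx
            rw [gauss_deriv_norm_sq h hh]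
            calc x ^ 2 * (h ^ (-(1/2:ℝ)) * Real.exp (-(x^2)/h))
                ≤ 1 * (h ^ (-(1/2:ℝ)) * Real.exp (-(1/(4*h)))) := by
                  apply mul_le_mul (hxsq1 x hx)
                    (mul_le_mul_of_nonneg_left (hexpbound x hx)
                      (le_of_lt (Real.rpow_pos_of_pos hh _)))
                    (by positivity) (by norm_num)
              _ = M := by rw [one_mul]
        _ = (volume S).toReal * M := by rw [setIntegral_const, smul_eq_mul, measureReal_def]
        _ ≤ 2 * M := mul_le_mul_of_nonneg_right hvolS2 hM0
    -- final computation
    have hMbound : 4 * M ≤ (100 * Real.exp (-1 / (10 * h))) ^ 2 := by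
      have e1 : (100 * Real.exp (-1 / (10 * h))) ^ 2
          = 10000 * Real.exp (-(1/(5*h))) := by
        rw [mul_pow, sq (Real.exp _), ← Real.exp_add]
        norm_num
        congr 1
        field_simp
        ring
      rw [e1, hMdef]
      have e2 : Real.exp (-(1/(4*h))) = Real.exp (-(1/(20*h))) * Real.exp (-(1/(5*h))) := by
        rw [← Real.exp_add]
        congr 1
        field_simp
        ring
      rw [e2]
      have e3 : Real.exp (-(1/(20*h))) ≤ 20 * h := by
        rw [Real.exp_neg]
        have ht : (0:ℝ) < 1/(20*h) := by positivity
        have := Real.add_one_le_exp (1/(20*h))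
        have hlt : 1/(20*h) < Real.exp (1/(20*h)) := by linarith
        calc (Real.exp (1/(20*h)))⁻¹ ≤ (1/(20*h))⁻¹ :=
              inv_anti₀ ht hlt.le
          _ = 20 * h := by field_simp
      have e4 : h ^ (-(1/2:ℝ)) ≤ h⁻¹ := by
        rw [show (h:ℝ)⁻¹ = h ^ (-(1:ℝ)) by rw [Real.rpow_neg_one]]
        exact Real.rpow_le_rpow_of_exponent_ge hh h1 (by norm_num)
      have e5 : h ^ (-(1/2:ℝ)) * Real.exp (-(1/(20*h))) ≤ 20 := by
        calc h ^ (-(1/2:ℝ)) * Real.exp (-(1/(20*h))) ≤ h⁻¹ * (20 * h) :=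
              mul_le_mul e4 e3 (le_of_lt (Real.exp_pos _)) (by positivity)
          _ = 20 := by field_simp
      have hexp5 : (0:ℝ) < Real.exp (-(1/(5*h))) := Real.exp_pos _
      nlinarith
    have hsum : (∫ x in S, ‖gaussQuasimode h x‖ ^ 2)
        + (∫ x in S, ‖h * deriv (gaussQuasimode h) x‖ ^ 2)
        ≤ (100 * Real.exp (-1 / (10 * h))) ^ 2 := by linarith
    unfold h1Norm
    calc Real.sqrt ((∫ x in S, ‖gaussQuasimode h x‖ ^ 2)
          + ∫ x in S, ‖h * deriv (gaussQuasimode h) x‖ ^ 2)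
        ≤ Real.sqrt ((100 * Real.exp (-1 / (10 * h))) ^ 2) := Real.sqrt_le_sqrt hsum
      _ = 100 * Real.exp (-1 / (10 * h)) := Real.sqrt_sq (by positivity)
end
end

section
/- Let h > 0, E₀ ∈ ℝ, V : [2,3.5] → ℝ continuous, and let v, w ∈ C²([2,3.5];ℂ) satisfy −h²v'' + (V−E₀)v = 0 and −h²w'' + (V−E₀)w = 0 on [2,3.5]. Then the Wronskian W(v,w) is constant on [2,3.5] and its value satisfies |W(v,w)| ≤ 4 ‖v‖_{H¹_h(2,2.5)} ‖w‖_{H¹_h(2,2.5)}. -/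
open MeasureTheory Set Real

noncomputable section

private lemma amgm_aux (t a b : ℝ) (ht : 0 < t) : a * b ≤ t / 2 * a ^ 2 + 1 / (2 * t) * b ^ 2 := by
  have h1 : 0 ≤ (t * a - b) ^ 2 := sq_nonneg _
  have h2 : (0:ℝ) < 2 * t := by linarith
  have h3 : t / 2 * a ^ 2 + 1 / (2 * t) * b ^ 2 - a * b = (t * a - b) ^ 2 / (2 * t) := by
    field_simp; ring
  nlinarith [div_nonneg h1 h2.le]

/-- If `v, w ∈ C²([2, 3.5])` both solve `-h²f'' + (V - E₀)f = 0`, then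
their semiclassical Wronskian `W(v,w) = v (h w') - w (h v')` is constant on `[2, 3.5]` and
satisfies `|W(v,w)| ≤ 4 ‖v‖_{H¹_h(2,2.5)} ‖w‖_{H¹_h(2,2.5)}`. -/
theorem wronskian_constant_and_small
    (h : ℝ) (hh : 0 < h) (E₀ : ℝ)
    (V : ℝ → ℝ) (hV : ContinuousOn V (Set.Icc (2 : ℝ) 3.5))
    (v v' v'' w w' w'' : ℝ → ℂ)
    (hv : ∀ x ∈ Set.Icc (2 : ℝ) 3.5, HasDerivAt v (v' x) x)
    (hv' : ∀ x ∈ Set.Icc (2 : ℝ) 3.5, HasDerivAt v' (v'' x) x)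
    (hw : ∀ x ∈ Set.Icc (2 : ℝ) 3.5, HasDerivAt w (w' x) x)
    (hw' : ∀ x ∈ Set.Icc (2 : ℝ) 3.5, HasDerivAt w' (w'' x) x)
    (hveq : ∀ x ∈ Set.Icc (2 : ℝ) 3.5,
      -(h : ℂ) ^ 2 * v'' x + ((V x - E₀ : ℝ) : ℂ) * v x = 0)
    (hweq : ∀ x ∈ Set.Icc (2 : ℝ) 3.5,
      -(h : ℂ) ^ 2 * w'' x + ((V x - E₀ : ℝ) : ℂ) * w x = 0) :
    (∀ x ∈ Set.Icc (2 : ℝ) 3.5, ∀ y ∈ Set.Icc (2 : ℝ) 3.5,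
      v x * ((h : ℂ) * w' x) - w x * ((h : ℂ) * v' x)
        = v y * ((h : ℂ) * w' y) - w y * ((h : ℂ) * v' y)) ∧
    (∀ x ∈ Set.Icc (2 : ℝ) 3.5,
      ‖v x * ((h : ℂ) * w' x) - w x * ((h : ℂ) * v' x)‖
        ≤ 4 * Real.sqrt ((∫ y in Set.Ioo (2 : ℝ) 2.5, ‖v y‖ ^ 2)
              + ∫ y in Set.Ioo (2 : ℝ) 2.5, ‖(h : ℂ) * v' y‖ ^ 2)
          * Real.sqrt ((∫ y in Set.Ioo (2 : ℝ) 2.5, ‖w y‖ ^ 2)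
              + ∫ y in Set.Ioo (2 : ℝ) 2.5, ‖(h : ℂ) * w' y‖ ^ 2)) := by
  set W : ℝ → ℂ := fun x => v x * ((h : ℂ) * w' x) - w x * ((h : ℂ) * v' x) with hW
  have hh0 : (h : ℂ) ^ 2 ≠ 0 := pow_ne_zero 2 (Complex.ofReal_ne_zero.2 hh.ne')
  -- derivative of W is 0 on the interval
  have hd : ∀ x ∈ Set.Icc (2 : ℝ) 3.5, HasDerivAt W 0 x := by
    intro x hx
    have key0 : v x * w'' x = w x * v'' x := by
      apply mul_left_cancel₀ hh0
      have e1 : (h : ℂ) ^ 2 * v'' x = ((V x - E₀ : ℝ) : ℂ) * v x := by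
        linear_combination -hveq x hx
      have e2 : (h : ℂ) ^ 2 * w'' x = ((V x - E₀ : ℝ) : ℂ) * w x := by
        linear_combination -hweq x hx
      linear_combination v x * e2 - w x * e1
    have hd1 : HasDerivAt W
        (v' x * ((h : ℂ) * w' x) + v x * ((h : ℂ) * w'' x)
          - (w' x * ((h : ℂ) * v' x) + w x * ((h : ℂ) * v'' x))) x :=
      ((hv x hx).mul ((hw' x hx).const_mul _)).sub
        ((hw x hx).mul ((hv' x hx).const_mul _))
    have : v' x * ((h : ℂ) * w' x) + v x * ((h : ℂ) * w'' x)
          - (w' x * ((h : ℂ) * v' x) + w x * ((h : ℂ) * v'' x)) = 0 := by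
      linear_combination (h : ℂ) * key0
    rwa [this] at hd1
  have h23 : (2 : ℝ) ≤ 3.5 := by norm_num
  have hconst : ∀ x ∈ Set.Icc (2 : ℝ) 3.5, W x = W 2 := by
    apply constant_of_derivWithin_zero
    · exact fun x hx => ((hd x hx).differentiableAt).differentiableWithinAt
    · intro x hx
      exact ((hd x (Set.Ico_subset_Icc_self hx)).hasDerivWithinAt).derivWithin
        ((uniqueDiffOn_Icc (by norm_num : (2:ℝ) < 3.5)) x (Set.Ico_subset_Icc_self hx))
  have part1 : ∀ x ∈ Set.Icc (2 : ℝ) 3.5, ∀ y ∈ Set.Icc (2 : ℝ) 3.5, W x = W y := by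
    intro x hx y hy; rw [hconst x hx, hconst y hy]
  refine ⟨part1, ?_⟩
  -- part 2
  intro x hx
  set K : ℝ := ‖W 2‖ with hK
  have hWx : ‖W x‖ = K := by rw [hconst x hx]
  rw [hWx]
  set f1 : ℝ → ℝ := fun y => ‖v y‖ ^ 2 with hf1
  set f2 : ℝ → ℝ := fun y => ‖(h : ℂ) * v' y‖ ^ 2 with hf2
  set f3 : ℝ → ℝ := fun y => ‖w y‖ ^ 2 with hf3
  set f4 : ℝ → ℝ := fun y => ‖(h : ℂ) * w' y‖ ^ 2 with hf4
  set IA : ℝ := (∫ y in Set.Ioo (2 : ℝ) 2.5, f1 y) + ∫ y in Set.Ioo (2 : ℝ) 2.5, f2 y with hIA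
  set IB : ℝ := (∫ y in Set.Ioo (2 : ℝ) 2.5, f3 y) + ∫ y in Set.Ioo (2 : ℝ) 2.5, f4 y with hIB
  -- continuity and integrability
  have hsub : Set.Icc (2 : ℝ) 2.5 ⊆ Set.Icc (2 : ℝ) 3.5 :=
    Set.Icc_subset_Icc_right (by norm_num)
  have hvc : ContinuousOn v (Set.Icc (2 : ℝ) 3.5) :=
    fun y hy => ((hv y hy).continuousAt).continuousWithinAt
  have hv'c : ContinuousOn v' (Set.Icc (2 : ℝ) 3.5) :=
    fun y hy => ((hv' y hy).continuousAt).continuousWithinAt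
  have hwc : ContinuousOn w (Set.Icc (2 : ℝ) 3.5) :=
    fun y hy => ((hw y hy).continuousAt).continuousWithinAt
  have hw'c : ContinuousOn w' (Set.Icc (2 : ℝ) 3.5) :=
    fun y hy => ((hw' y hy).continuousAt).continuousWithinAt
  have int1 : IntegrableOn f1 (Set.Ioo (2 : ℝ) 2.5) :=
    (((hvc.mono hsub).norm.pow 2).integrableOn_Icc).mono_set Set.Ioo_subset_Icc_self
  have int2 : IntegrableOn f2 (Set.Ioo (2 : ℝ) 2.5) :=
    ((((continuousOn_const.mul (hv'c.mono hsub)).norm.pow 2)).integrableOn_Icc).mono_set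
      Set.Ioo_subset_Icc_self
  have int3 : IntegrableOn f3 (Set.Ioo (2 : ℝ) 2.5) :=
    (((hwc.mono hsub).norm.pow 2).integrableOn_Icc).mono_set Set.Ioo_subset_Icc_self
  have int4 : IntegrableOn f4 (Set.Ioo (2 : ℝ) 2.5) :=
    ((((continuousOn_const.mul (hw'c.mono hsub)).norm.pow 2)).integrableOn_Icc).mono_set
      Set.Ioo_subset_Icc_self
  have hIA0 : 0 ≤ IA := by
    rw [hIA]
    exact add_nonneg (integral_nonneg fun y => by positivity)
      (integral_nonneg fun y => by positivity)
  have hIB0 : 0 ≤ IB := by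
    rw [hIB]
    exact add_nonneg (integral_nonneg fun y => by positivity)
      (integral_nonneg fun y => by positivity)
  -- key inequality
  have key : ∀ t : ℝ, 0 < t → K ≤ t * IA + IB / t := by
    intro t ht
    have hIooIcc : Set.Ioo (2 : ℝ) 2.5 ⊆ Set.Icc (2 : ℝ) 3.5 := fun y hy =>
      ⟨hy.1.le, le_trans hy.2.le (by norm_num)⟩
    have hpt : ∀ y ∈ Set.Ioo (2 : ℝ) 2.5,
        K ≤ t / 2 * (f1 y + f2 y) + 1 / (2 * t) * (f3 y + f4 y) := by
      intro y hy
      have hyI := hIooIcc hy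
      have hWy : K = ‖W y‖ := by rw [hconst y hyI]
      have hnorm : ‖W y‖ ≤ ‖v y‖ * ‖(h : ℂ) * w' y‖ + ‖w y‖ * ‖(h : ℂ) * v' y‖ := by
        have e1 : ‖v y * ((h : ℂ) * w' y)‖ = ‖v y‖ * ‖(h : ℂ) * w' y‖ := norm_mul _ _
        have e2 : ‖w y * ((h : ℂ) * v' y)‖ = ‖w y‖ * ‖(h : ℂ) * v' y‖ := norm_mul _ _
        calc ‖W y‖ ≤ ‖v y * ((h : ℂ) * w' y)‖ + ‖w y * ((h : ℂ) * v' y)‖ := norm_sub_le _ _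
        _ = ‖v y‖ * ‖(h : ℂ) * w' y‖ + ‖w y‖ * ‖(h : ℂ) * v' y‖ := by rw [e1, e2]
      have am1 : ‖v y‖ * ‖(h : ℂ) * w' y‖ ≤ t / 2 * f1 y + 1 / (2 * t) * f4 y :=
        amgm_aux t _ _ ht
      have am2 : ‖w y‖ * ‖(h : ℂ) * v' y‖ ≤ t / 2 * f2 y + 1 / (2 * t) * f3 y := by
        have := amgm_aux t ‖(h : ℂ) * v' y‖ ‖w y‖ ht
        calc ‖w y‖ * ‖(h : ℂ) * v' y‖ = ‖(h : ℂ) * v' y‖ * ‖w y‖ := mul_comm _ _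
        _ ≤ t / 2 * f2 y + 1 / (2 * t) * f3 y := this
      rw [hWy]
      calc ‖W y‖ ≤ ‖v y‖ * ‖(h : ℂ) * w' y‖ + ‖w y‖ * ‖(h : ℂ) * v' y‖ := hnorm
      _ ≤ t / 2 * (f1 y + f2 y) + 1 / (2 * t) * (f3 y + f4 y) := by linarith
    -- integrate the pointwise bound
    have hKint : IntegrableOn (fun _ : ℝ => K) (Set.Ioo (2 : ℝ) 2.5) :=
      integrableOn_const measure_Ioo_lt_top.ne
    have intF : IntegrableOn (fun y => t / 2 * (f1 y + f2 y)) (Set.Ioo (2 : ℝ) 2.5) :=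
      (int1.add int2).const_mul _
    have intG : IntegrableOn (fun y => 1 / (2 * t) * (f3 y + f4 y)) (Set.Ioo (2 : ℝ) 2.5) :=
      (int3.add int4).const_mul _
    have int12 : IntegrableOn (fun y => f1 y + f2 y) (Set.Ioo (2 : ℝ) 2.5) := int1.add int2
    have int34 : IntegrableOn (fun y => f3 y + f4 y) (Set.Ioo (2 : ℝ) 2.5) := int3.add int4
    have hFint : IntegrableOn
        (fun y => t / 2 * (f1 y + f2 y) + 1 / (2 * t) * (f3 y + f4 y))
        (Set.Ioo (2 : ℝ) 2.5) := intF.add intG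
    have hmono := setIntegral_mono_on hKint hFint measurableSet_Ioo hpt
    have hL : (∫ _ in Set.Ioo (2 : ℝ) 2.5, K) = 0.5 * K := by
      rw [setIntegral_const, measureReal_def, Real.volume_Ioo]
      norm_num
    have hR : (∫ y in Set.Ioo (2 : ℝ) 2.5,
        (t / 2 * (f1 y + f2 y) + 1 / (2 * t) * (f3 y + f4 y)))
        = t / 2 * IA + 1 / (2 * t) * IB := by
      rw [hIA, hIB, integral_add intF intG, integral_const_mul, integral_const_mul,
        integral_add int1 int2, integral_add int3 int4]
    rw [hL, hR] at hmono
    have ht' : t ≠ 0 := ne_of_gt ht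
    have : IB / t = 2 * (1 / (2 * t) * IB) := by field_simp
    linarith
  -- optimize over t
  clear_value K IA IB
  have main : K ≤ 2 * Real.sqrt IA * Real.sqrt IB := by
    rcases eq_or_lt_of_le hIA0 with hA | hA
    · -- IA = 0
      have hK0 : K ≤ 0 := by
        by_contra hc
        push_neg at hc
        have := key ((IB + 1) / K) (by positivity)
        rw [← hA] at this
        have h1 : IB / ((IB + 1) / K) = IB * K / (IB + 1) := by field_simp
        have h2 : IB * K / (IB + 1) < K := by
          rw [div_lt_iff₀ (by linarith)]
          nlinarith
        rw [h1] at this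
        linarith [this]
      have : 0 ≤ 2 * Real.sqrt IA * Real.sqrt IB := by positivity
      linarith
    · rcases eq_or_lt_of_le hIB0 with hB | hB
      · -- IB = 0
        have hK0 : K ≤ 0 := by
          by_contra hc
          push_neg at hc
          have := key (K / (2 * IA)) (by positivity)
          rw [← hB] at this
          have h1 : (0:ℝ) / (K / (2 * IA)) = 0 := by simp
          rw [h1] at this
          have h2 : K / (2 * IA) * IA = K / 2 := by field_simp
          rw [h2] at this
          linarith
        have : 0 ≤ 2 * Real.sqrt IA * Real.sqrt IB := by positivity
        linarith
      · -- both positive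
        set sA := Real.sqrt IA with hsA
        set sB := Real.sqrt IB with hsB
        have hsA0 : 0 < sA := Real.sqrt_pos.2 hA
        have hsB0 : 0 < sB := Real.sqrt_pos.2 hB
        have hsA2 : sA ^ 2 = IA := Real.sq_sqrt hIA0
        have hsB2 : sB ^ 2 = IB := Real.sq_sqrt hIB0
        have := key (sB / sA) (by positivity)
        have heq : sB / sA * IA + IB / (sB / sA) = 2 * sA * sB := by
          rw [← hsA2, ← hsB2]
          field_simp
          ring
        rw [heq] at this
        exact this
  calc K ≤ 2 * Real.sqrt IA * Real.sqrt IB := main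
  _ ≤ 4 * Real.sqrt IA * Real.sqrt IB := by
      have : 0 ≤ Real.sqrt IA * Real.sqrt IB := by positivity
      nlinarith
end
end
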